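/- Let u_c ∈ H³(ℝⁿ) with sup_{c≥1} ‖u_c‖_{H³(ℝⁿ)} = M < ∞. Then ‖(−Δ + 1 − P_c(D))u_c‖_{H^{−1}(ℝⁿ)} ≤ C·M/c² for a constant C independent of c ≥ 1, where P_c(D) is the Fourier multiplier with symbol P_c(ξ) = sqrt(c²|ξ|² + c⁴/4) − c²/2 + 1. -/

import Mathlib

open MeasureTheory
open scoped FourierTransform

/-- The inhomogeneous Sobolev norm `‖u‖_{H^s(ℝⁿ)}`, defined on the Fourier side. -/
noncomputable def sobolevNorm (n : ℕ) (s : ℝ) (u : EuclideanSpace ℝ (Fin n) → ℂ) : ℝ :=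
  Real.sqrt (((2 * Real.pi) ^ n)⁻¹ *
    ∫ ξ : EuclideanSpace ℝ (Fin n), (1 + ‖ξ‖ ^ 2) ^ s * ‖𝓕 u ξ‖ ^ 2)

/-- Membership in the Sobolev space `H^s(ℝⁿ)`. -/
def MemSobolev (n : ℕ) (s : ℝ) (u : EuclideanSpace ℝ (Fin n) → ℂ) : Prop :=
  Integrable (fun ξ : EuclideanSpace ℝ (Fin n) => (1 + ‖ξ‖ ^ 2) ^ s * ‖𝓕 u ξ‖ ^ 2)

lemma symbol_diff_bound {c t : ℝ} (hc : 1 ≤ c) (ht : 0 ≤ t) :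
    0 ≤ t + 1 - (Real.sqrt (c ^ 2 * t + c ^ 4 / 4) - c ^ 2 / 2 + 1) ∧
    t + 1 - (Real.sqrt (c ^ 2 * t + c ^ 4 / 4) - c ^ 2 / 2 + 1) ≤ t ^ 2 / c ^ 2 := by
  have hc0 : (0:ℝ) < c := lt_of_lt_of_le one_pos hc
  have hnn : 0 ≤ c ^ 2 * t + c ^ 4 / 4 := by positivity
  set a := Real.sqrt (c ^ 2 * t + c ^ 4 / 4) with ha
  have ha2 : a ^ 2 = c ^ 2 * t + c ^ 4 / 4 := Real.sq_sqrt hnn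
  have ha0 : 0 ≤ a := Real.sqrt_nonneg _
  have hage : c ^ 2 / 2 ≤ a := by
    rw [ha, show c ^ 2 * t + c ^ 4 / 4 = c ^ 2 * t + (c ^ 2 / 2) ^ 2 by ring]
    calc c ^ 2 / 2 = Real.sqrt ((c ^ 2 / 2) ^ 2) := (Real.sqrt_sq (by positivity)).symm
      _ ≤ _ := Real.sqrt_le_sqrt (by nlinarith)
  have hle : a ≤ t + c ^ 2 / 2 := by
    nlinarith [sq_nonneg (a - (t + c ^ 2 / 2)), sq_nonneg (a + (t + c ^ 2 / 2))]
  refine ⟨by linarith, ?_⟩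
  rw [le_div_iff₀ (by positivity : (0:ℝ) < c ^ 2)]
  nlinarith [mul_nonneg (sub_nonneg.2 hle) (sub_nonneg.2 hage)]

lemma pointwise_bound {c t h : ℝ} (hc : 1 ≤ c) (ht : 0 ≤ t) (hh : 0 ≤ h) :
    (1 + t)⁻¹ * (t + 1 - (Real.sqrt (c ^ 2 * t + c ^ 4 / 4) - c ^ 2 / 2 + 1)) ^ 2 * h
      ≤ (c ^ 2)⁻¹ ^ 2 * ((1 + t) ^ (3:ℝ) * h) := by
  have hc0 : (0:ℝ) < c := lt_of_lt_of_le one_pos hc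
  obtain ⟨h0, h1⟩ := symbol_diff_bound hc ht
  have h1t : (0:ℝ) < 1 + t := by linarith
  have hrw : (1 + t) ^ (3:ℝ) = (1 + t) ^ (3:ℕ) := by
    rw [show ((3:ℝ)) = ((3:ℕ):ℝ) by norm_num, Real.rpow_natCast]
  rw [hrw]
  have hsq : (t + 1 - (Real.sqrt (c ^ 2 * t + c ^ 4 / 4) - c ^ 2 / 2 + 1)) ^ 2
      ≤ (t ^ 2 / c ^ 2) ^ 2 := by
    apply pow_le_pow_left₀ h0 h1
  have ht4 : t ^ 4 ≤ (1 + t) ^ 4 := by nlinarith [sq_nonneg t, sq_nonneg (1+t)]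
  have key : (1 + t)⁻¹ * (t ^ 2 / c ^ 2) ^ 2 ≤ (c ^ 2)⁻¹ ^ 2 * (1 + t) ^ (3:ℕ) := by
    rw [inv_mul_le_iff₀ h1t]
    have : (t ^ 2 / c ^ 2) ^ 2 = (c ^ 2)⁻¹ ^ 2 * t ^ 4 := by field_simp
    rw [this]
    calc (c ^ 2)⁻¹ ^ 2 * t ^ 4 ≤ (c ^ 2)⁻¹ ^ 2 * (1 + t) ^ 4 :=
          mul_le_mul_of_nonneg_left ht4 (by positivity)
      _ = (1 + t) * ((c ^ 2)⁻¹ ^ 2 * (1 + t) ^ (3:ℕ)) := by ring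
  calc (1 + t)⁻¹ * (t + 1 - (Real.sqrt (c ^ 2 * t + c ^ 4 / 4) - c ^ 2 / 2 + 1)) ^ 2 * h
      ≤ (1 + t)⁻¹ * (t ^ 2 / c ^ 2) ^ 2 * h := by
        exact mul_le_mul_of_nonneg_right (mul_le_mul_of_nonneg_left hsq (by positivity)) hh
    _ ≤ (c ^ 2)⁻¹ ^ 2 * (1 + t) ^ (3:ℕ) * h := mul_le_mul_of_nonneg_right key hh
    _ = (c ^ 2)⁻¹ ^ 2 * ((1 + t) ^ (3:ℕ) * h) := by ring

/-- If `u_c ∈ H³(ℝⁿ)` with `‖u_c‖_{H³} ≤ M` uniformly in `c ≥ 1`, then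
`‖(-Δ + 1 - P_c(D))u_c‖_{H^{-1}} ≤ C·M/c²` with `C` independent of `c ≥ 1`, the `H^{-1}` norm
of the multiplier being expressed on the Fourier side via Plancherel. -/
theorem multiplier_difference_Hminus1_estimate (n : ℕ) :
    ∃ C : ℝ, 0 < C ∧ ∀ c : ℝ, 1 ≤ c → ∀ M : ℝ, ∀ u : EuclideanSpace ℝ (Fin n) → ℂ,
      MemSobolev n 3 u → sobolevNorm n 3 u ≤ M →
      Real.sqrt (((2 * Real.pi) ^ n)⁻¹ *
          ∫ ξ : EuclideanSpace ℝ (Fin n),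
            (1 + ‖ξ‖ ^ 2)⁻¹ *
              (‖ξ‖ ^ 2 + 1 - (Real.sqrt (c ^ 2 * ‖ξ‖ ^ 2 + c ^ 4 / 4) - c ^ 2 / 2 + 1)) ^ 2 *
              ‖𝓕 u ξ‖ ^ 2)
        ≤ C * M / c ^ 2 := by
  refine ⟨1, one_pos, ?_⟩
  intro c hc M u hu hM
  have hc0 : (0:ℝ) < c := lt_of_lt_of_le one_pos hc
  have hM0 : 0 ≤ M := le_trans (Real.sqrt_nonneg _) hM
  have hpi : (0:ℝ) < ((2 * Real.pi) ^ n)⁻¹ := by positivity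
  set g : EuclideanSpace ℝ (Fin n) → ℝ :=
    fun ξ => (1 + ‖ξ‖ ^ 2) ^ (3:ℝ) * ‖𝓕 u ξ‖ ^ 2 with hg
  have hgint : Integrable g := hu
  have hint : (∫ ξ : EuclideanSpace ℝ (Fin n),
      (1 + ‖ξ‖ ^ 2)⁻¹ *
        (‖ξ‖ ^ 2 + 1 - (Real.sqrt (c ^ 2 * ‖ξ‖ ^ 2 + c ^ 4 / 4) - c ^ 2 / 2 + 1)) ^ 2 *
        ‖𝓕 u ξ‖ ^ 2)
      ≤ ∫ ξ : EuclideanSpace ℝ (Fin n), (c ^ 2)⁻¹ ^ 2 * g ξ := by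
    apply integral_mono_of_nonneg
    · filter_upwards with ξ
      have h0 := (symbol_diff_bound hc (sq_nonneg ‖ξ‖)).1
      positivity
    · exact hgint.const_mul _
    · filter_upwards with ξ
      exact pointwise_bound hc (sq_nonneg ‖ξ‖) (sq_nonneg ‖𝓕 u ξ‖)
  rw [integral_const_mul] at hint
  calc Real.sqrt (((2 * Real.pi) ^ n)⁻¹ * ∫ ξ : EuclideanSpace ℝ (Fin n),
        (1 + ‖ξ‖ ^ 2)⁻¹ *
          (‖ξ‖ ^ 2 + 1 - (Real.sqrt (c ^ 2 * ‖ξ‖ ^ 2 + c ^ 4 / 4) - c ^ 2 / 2 + 1)) ^ 2 *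
          ‖𝓕 u ξ‖ ^ 2)
      ≤ Real.sqrt (((2 * Real.pi) ^ n)⁻¹ * ((c ^ 2)⁻¹ ^ 2 * ∫ ξ, g ξ)) := by
        exact Real.sqrt_le_sqrt (mul_le_mul_of_nonneg_left hint hpi.le)
    _ = Real.sqrt ((c ^ 2)⁻¹ ^ 2 * (((2 * Real.pi) ^ n)⁻¹ * ∫ ξ, g ξ)) := by ring_nf
    _ = (c ^ 2)⁻¹ * Real.sqrt (((2 * Real.pi) ^ n)⁻¹ * ∫ ξ, g ξ) := by
        rw [Real.sqrt_mul (by positivity), Real.sqrt_sq (by positivity)]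
    _ = (c ^ 2)⁻¹ * sobolevNorm n 3 u := rfl
    _ ≤ (c ^ 2)⁻¹ * M := mul_le_mul_of_nonneg_left hM (by positivity)
    _ = 1 * M / c ^ 2 := by field_simp
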